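/- arXiv:2102.04551 — 2 statements merged into one kernel-verified Lean document; each statement's English description precedes it below -/
import Mathlib

section
/- Every finitely generated group of subexponential growth is amenable. -/
open Filter Real Topology

/-- The ball of radius `t` in the word metric on `G` associated with the
(symmetrized) generating set `S`. -/
def wordBall {G : Type*} [Group G] (S : Set G) (t : ℕ) : Set G :=
  {g | ∃ l : List G, (∀ x ∈ l, x ∈ S ∨ x⁻¹ ∈ S) ∧ l.length ≤ t ∧ l.prod = g}

lemma one_mem_wordBall {G : Type*} [Group G] (S : Set G) (t : ℕ) :
    (1 : G) ∈ wordBall S t :=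
  ⟨[], by simp, by simp, by simp⟩

lemma wordBall_mono {G : Type*} [Group G] (S : Set G) {t t' : ℕ} (h : t ≤ t') :
    wordBall S t ⊆ wordBall S t' := by
  rintro g ⟨l, h1, h2, h3⟩
  exact ⟨l, h1, h2.trans h, h3⟩

lemma mul_mem_wordBall {G : Type*} [Group G] {S : Set G} {x : G}
    (hx : x ∈ S ∨ x⁻¹ ∈ S) {g : G} {t : ℕ} (hg : g ∈ wordBall S t) :
    x * g ∈ wordBall S (t + 1) := by
  obtain ⟨l, h1, h2, h3⟩ := hg
  refine ⟨x :: l, ?_, ?_, ?_⟩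
  · intro y hy
    rcases List.mem_cons.mp hy with rfl | hy
    · exact hx
    · exact h1 y hy
  · simpa using Nat.succ_le_succ h2
  · simp [h3]

lemma wordBall_finite {G : Type*} [Group G] (S : Finset G) (t : ℕ) :
    (wordBall (S : Set G) t).Finite := by
  induction t with
  | zero =>
    refine (Set.finite_singleton (1 : G)).subset ?_
    rintro g ⟨l, _, h2, h3⟩
    have hl : l = [] := List.eq_nil_of_length_eq_zero (Nat.le_zero.mp h2)
    subst hl
    simp at h3
    simp [← h3]
  | succ t ih =>
    have hT : ({x : G | x ∈ S ∨ x⁻¹ ∈ S}).Finite := by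
      have : {x : G | x ∈ S ∨ x⁻¹ ∈ S} ⊆ (S : Set G) ∪ (fun y : G => y⁻¹) '' S := by
        rintro x (hx | hx)
        · exact Or.inl hx
        · exact Or.inr ⟨x⁻¹, hx, by simp⟩
      exact (S.finite_toSet.union (S.finite_toSet.image _)).subset this
    refine (((Set.finite_singleton (1 : G)).union
      (hT.biUnion fun x _ => ih.image (x * ·)))).subset ?_
    rintro g ⟨l, h1, h2, h3⟩
    match l with
    | [] => exact Or.inl (by simp [← h3])
    | x :: l' =>
      have hmem : l'.prod ∈ wordBall (S : Set G) t :=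
        ⟨l', fun y hy => h1 y (by simp [hy]), by simpa using Nat.succ_le_succ_iff.mp h2, rfl⟩
      refine Or.inr (Set.mem_biUnion (h1 x (by simp)) ?_)
      exact ⟨l'.prod, hmem, by simpa using h3⟩

/-- Every finitely generated group of subexponential growth is amenable: it
admits a finitely additive left-invariant probability measure on all subsets. -/
theorem amenable_of_subexponential_growth {G : Type*} [Group G] (S : Finset G)
    (hgen : Subgroup.closure (S : Set G) = ⊤)
    (hsub : Tendsto (fun t : ℕ => Real.log ((wordBall (S : Set G) t).ncard) / t)
      atTop (𝓝 0)) :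
    ∃ μ : Set G → ℝ, μ Set.univ = 1 ∧ (∀ A, 0 ≤ μ A) ∧
      (∀ A B : Set G, Disjoint A B → μ (A ∪ B) = μ A + μ B) ∧
      (∀ (g : G) (A : Set G), μ ((g * ·) '' A) = μ A) := by
  classical
  set B : ℕ → Set G := fun t => wordBall (S : Set G) t with hB
  have hfin : ∀ t, (B t).Finite := fun t => wordBall_finite S t
  set b : ℕ → ℕ := fun t => (B t).ncard with hbdef
  have hb1 : ∀ t, 1 ≤ b t := by
    intro t
    have : (B t).Nonempty := ⟨1, one_mem_wordBall _ _⟩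
    exact (Set.ncard_pos (hfin t)).2 this
  have hbpos : ∀ t, (0 : ℝ) < b t := fun t => by exact_mod_cast hb1 t
  have hmono : ∀ t, B t ⊆ B (t + 1) := fun t => wordBall_mono _ (Nat.le_succ t)
  have hbmono : ∀ t, b t ≤ b (t + 1) := fun t =>
    Set.ncard_le_ncard (hmono t) (hfin (t + 1))
  -- Step 1: frequently small ratio
  have hfreq : ∀ n : ℕ, ∃ᶠ k in atTop, (b (k + 1) : ℝ) < (1 + 1 / (n + 1)) * b k := by
    intro n
    by_contra hcon
    rw [Filter.not_frequently, eventually_atTop] at hcon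
    obtain ⟨N, hN⟩ := hcon
    have hN' : ∀ k, N ≤ k → (1 + 1 / ((n : ℝ) + 1)) * b k ≤ b (k + 1) := by
      intro k hk
      have := hN k hk
      push_neg at this
      exact this
    have hinvpos : (0 : ℝ) < 1 / ((n : ℝ) + 1) := by positivity
    have hc1 : (1 : ℝ) < 1 + 1 / ((n : ℝ) + 1) := by linarith
    have hcpos : (0 : ℝ) < 1 + 1 / ((n : ℝ) + 1) := by linarith
    have hgrow : ∀ m : ℕ, (1 + 1 / ((n : ℝ) + 1)) ^ m ≤ b (N + m) := by
      intro m
      induction m with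
      | zero => simpa using (by exact_mod_cast hb1 N : (1 : ℝ) ≤ b N)
      | succ m ih =>
        calc (1 + 1 / ((n : ℝ) + 1)) ^ (m + 1)
            = (1 + 1 / ((n : ℝ) + 1)) * (1 + 1 / ((n : ℝ) + 1)) ^ m := by ring
          _ ≤ (1 + 1 / ((n : ℝ) + 1)) * b (N + m) := by nlinarith [hbpos (N + m)]
          _ ≤ b (N + m + 1) := hN' (N + m) (Nat.le_add_right _ _)
    have hlog : ∀ t, N ≤ t →
        ((t - N : ℕ) : ℝ) * Real.log (1 + 1 / ((n : ℝ) + 1)) ≤ Real.log (b t) := by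
      intro t ht
      have h1 : (1 + 1 / ((n : ℝ) + 1)) ^ (t - N) ≤ b t := by
        have := hgrow (t - N)
        rwa [Nat.add_sub_cancel' ht] at this
      have := Real.log_le_log (by positivity) h1
      rwa [Real.log_pow] at this
    have hle : ∀ᶠ t in atTop,
        ((t - N : ℕ) : ℝ) * Real.log (1 + 1 / ((n : ℝ) + 1)) / t ≤
          Real.log ((wordBall (S : Set G) t).ncard) / t := by
      filter_upwards [eventually_ge_atTop N] with t ht
      have htpos : (0 : ℝ) ≤ (t : ℝ) := Nat.cast_nonneg t
      have : Real.log ((wordBall (S : Set G) t).ncard) = Real.log (b t) := rfl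
      rw [this]
      gcongr
      exact hlog t ht
    have hratio : Tendsto (fun t : ℕ => ((t - N : ℕ) : ℝ) / t) atTop (𝓝 1) := by
      have h0 : Tendsto (fun t : ℕ => 1 - (N : ℝ) / t) atTop (𝓝 1) := by
        have := tendsto_const_div_atTop_nhds_zero_nat (N : ℝ)
        simpa using (tendsto_const_nhds (x := (1 : ℝ))).sub this
      refine h0.congr' ?_
      filter_upwards [eventually_ge_atTop (max N 1)] with t ht
      have htN : N ≤ t := le_trans (le_max_left _ _) ht
      have ht1 : 1 ≤ t := le_trans (le_max_right _ _) ht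
      have htpos : (0 : ℝ) < t := by exact_mod_cast ht1
      rw [Nat.cast_sub htN]
      field_simp
    have hlow : Tendsto
        (fun t : ℕ => ((t - N : ℕ) : ℝ) * Real.log (1 + 1 / ((n : ℝ) + 1)) / t) atTop
        (𝓝 (Real.log (1 + 1 / ((n : ℝ) + 1)))) := by
      have := hratio.mul_const (Real.log (1 + 1 / ((n : ℝ) + 1)))
      simp only [one_mul] at this
      refine this.congr fun t => ?_
      ring
    have hfin2 : Real.log (1 + 1 / ((n : ℝ) + 1)) ≤ 0 :=
      le_of_tendsto_of_tendsto hlow hsub hle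
    have := Real.log_pos hc1
    linarith
  -- Step 2: extraction
  obtain ⟨φ, hφmono, hφ⟩ := Filter.extraction_forall_of_frequently hfreq
  set U : Ultrafilter ℕ := Ultrafilter.of (Filter.map φ atTop) with hU
  have hUle : (U : Filter ℕ) ≤ Filter.map φ atTop := Ultrafilter.of_le _
  set r : ℕ → ℝ := fun t => (b (t + 1) : ℝ) / b t with hr
  have hrge1 : ∀ t, 1 ≤ r t := by
    intro t
    show (1 : ℝ) ≤ (b (t + 1) : ℝ) / b t
    rw [le_div_iff₀ (hbpos t)]
    simpa using (by exact_mod_cast hbmono t : (b t : ℝ) ≤ b (t + 1))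
  have hrtends : Tendsto r (U : Filter ℕ) (𝓝 1) := by
    refine Tendsto.mono_left ?_ hUle
    rw [tendsto_map'_iff]
    refine tendsto_of_tendsto_of_tendsto_of_le_of_le (g := fun _ => (1 : ℝ))
      (h := fun n : ℕ => 1 + 1 / (n + 1)) tendsto_const_nhds ?_
      (fun n => hrge1 (φ n)) ?_
    · have : Tendsto (fun n : ℕ => 1 / ((n : ℝ) + 1)) atTop (𝓝 0) :=
        tendsto_one_div_add_atTop_nhds_zero_nat
      simpa using tendsto_const_nhds.add this
    · intro n
      show (b (φ n + 1) : ℝ) / b (φ n) ≤ 1 + 1 / ((n : ℝ) + 1)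
      rw [div_le_iff₀ (hbpos (φ n))]
      exact le_of_lt (hφ n)
  -- the measures along the way
  set f : Set G → ℕ → ℝ := fun A t => ((A ∩ B t).ncard : ℝ) / b t with hf
  have hf01 : ∀ A t, f A t ∈ Set.Icc (0 : ℝ) 1 := by
    intro A t
    constructor
    · positivity
    · rw [show f A t = ((A ∩ B t).ncard : ℝ) / b t from rfl, div_le_one (hbpos t)]
      exact_mod_cast Set.ncard_le_ncard Set.inter_subset_right (hfin t)
  have hconv : ∀ A : Set G, ∃ a, Tendsto (f A) (U : Filter ℕ) (𝓝 a) := by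
    intro A
    have hle : (Ultrafilter.map (f A) U : Filter ℝ) ≤ 𝓟 (Set.Icc (0 : ℝ) 1) := by
      rw [le_principal_iff]
      exact Filter.mem_map.2 (Filter.univ_mem' fun t => hf01 A t)
    obtain ⟨a, -, ha⟩ := isCompact_Icc.ultrafilter_le_nhds (Ultrafilter.map (f A) U) hle
    exact ⟨a, ha⟩
  set μ : Set G → ℝ := fun A => limUnder (U : Filter ℕ) (f A) with hμdef
  have hμ : ∀ A : Set G, Tendsto (f A) (U : Filter ℕ) (𝓝 (μ A)) := fun A =>
    tendsto_nhds_limUnder (hconv A)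
  -- key estimate for invariance
  have hhalf : ∀ g : G, (g ∈ S ∨ g⁻¹ ∈ S) → ∀ (A : Set G) (t : ℕ),
      (A ∩ B t).ncard ≤ (((g * ·) '' A) ∩ B t).ncard + (b (t + 1) - b t) := by
    intro g hg A t
    have h1 : (g * ·) '' (A ∩ B t) ⊆ ((g * ·) '' A) ∩ B (t + 1) := by
      rintro y ⟨x, ⟨hxA, hxB⟩, rfl⟩
      exact ⟨⟨x, hxA, rfl⟩, mul_mem_wordBall hg hxB⟩
    have h2 : (A ∩ B t).ncard ≤ (((g * ·) '' A) ∩ B (t + 1)).ncard := by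
      rw [← Set.ncard_image_of_injective (A ∩ B t) (mul_right_injective g)]
      exact Set.ncard_le_ncard h1 ((hfin (t + 1)).inter_of_right _)
    have h3 : ((g * ·) '' A) ∩ B (t + 1) ⊆ (((g * ·) '' A) ∩ B t) ∪ (B (t + 1) \ B t) := by
      rintro y ⟨hyA, hyB⟩
      by_cases hy : y ∈ B t
      · exact Or.inl ⟨hyA, hy⟩
      · exact Or.inr ⟨hyB, hy⟩
    have h4 : (((g * ·) '' A) ∩ B (t + 1)).ncard ≤
        ((((g * ·) '' A) ∩ B t)).ncard + (B (t + 1) \ B t).ncard :=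
      (Set.ncard_le_ncard h3 (((hfin t).inter_of_right _).union
        ((hfin (t + 1)).diff))).trans (Set.ncard_union_le _ _)
    have h5 : (B (t + 1) \ B t).ncard = b (t + 1) - b t :=
      Set.ncard_diff (hmono t) (hfin t)
    omega
  have hkey : ∀ g : G, (g ∈ S ∨ g⁻¹ ∈ S) → ∀ (A : Set G) (t : ℕ),
      |f ((g * ·) '' A) t - f A t| ≤ r t - 1 := by
    intro g hg A t
    have hsymm : (g⁻¹ ∈ S ∨ (g⁻¹)⁻¹ ∈ S) := by
      rcases hg with h | h
      · exact Or.inr (by simpa using h)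
      · exact Or.inl h
    have e1 : (A ∩ B t).ncard ≤ (((g * ·) '' A) ∩ B t).ncard + (b (t + 1) - b t) :=
      hhalf g hg A t
    have e2' := hhalf g⁻¹ hsymm ((g * ·) '' A) t
    have himg : (g⁻¹ * ·) '' ((g * ·) '' A) = A := by
      rw [← Set.image_comp]
      simp [Function.comp]
    rw [himg] at e2'
    have hsub' : b t ≤ b (t + 1) := hbmono t
    have hcast : ((b (t + 1) - b t : ℕ) : ℝ) = (b (t + 1) : ℝ) - b t := Nat.cast_sub hsub'
    have hbound : |((((g * ·) '' A) ∩ B t).ncard : ℝ) - ((A ∩ B t).ncard : ℝ)| ≤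
        (b (t + 1) : ℝ) - b t := by
      rw [abs_sub_le_iff]
      constructor
      · rw [← hcast]
        have : (((g * ·) '' A ∩ B t).ncard : ℝ) ≤
            ((A ∩ B t).ncard : ℝ) + ((b (t + 1) - b t : ℕ) : ℝ) := by exact_mod_cast e2'
        linarith
      · rw [← hcast]
        have : ((A ∩ B t).ncard : ℝ) ≤
            (((g * ·) '' A ∩ B t).ncard : ℝ) + ((b (t + 1) - b t : ℕ) : ℝ) := by exact_mod_cast e1
        linarith
    have heq : f ((g * ·) '' A) t - f A t =
        ((((g * ·) '' A) ∩ B t).ncard - ((A ∩ B t).ncard : ℝ)) / b t := by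
      show (((g * ·) '' A ∩ B t).ncard : ℝ) / b t - ((A ∩ B t).ncard : ℝ) / b t = _
      ring
    have hrb : r t * b t = (b (t + 1) : ℝ) :=
      div_mul_cancel₀ _ (ne_of_gt (hbpos t))
    have heq2 : (r t - 1) * (b t : ℝ) = (b (t + 1) : ℝ) - b t := by
      rw [sub_mul, hrb]; ring
    rw [heq, abs_div, abs_of_pos (hbpos t), div_le_iff₀ (hbpos t), heq2]
    exact hbound
  have hinv1 : ∀ g : G, (g ∈ S ∨ g⁻¹ ∈ S) → ∀ A : Set G, μ ((g * ·) '' A) = μ A := by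
    intro g hg A
    have h0 : Tendsto (fun t => f ((g * ·) '' A) t - f A t) (U : Filter ℕ) (𝓝 0) := by
      have hub : Tendsto (fun t => r t - 1) (U : Filter ℕ) (𝓝 0) := by
        simpa using hrtends.sub (tendsto_const_nhds : Tendsto (fun _ : ℕ => (1:ℝ)) _ _)
      exact squeeze_zero_norm (fun t => hkey g hg A t) hub
    have h1 : Tendsto (fun t => f ((g * ·) '' A) t - f A t) (U : Filter ℕ)
        (𝓝 (μ ((g * ·) '' A) - μ A)) := (hμ _).sub (hμ A)
    have := tendsto_nhds_unique h1 h0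
    linarith
  refine ⟨μ, ?_, ?_, ?_, ?_⟩
  · have : ∀ t, f Set.univ t = 1 := by
      intro t
      show ((Set.univ ∩ B t).ncard : ℝ) / b t = 1
      rw [Set.univ_inter]
      exact div_self (ne_of_gt (hbpos t))
    have h1 : Tendsto (f Set.univ) (U : Filter ℕ) (𝓝 1) := by
      simp only [funext this]
      exact tendsto_const_nhds
    exact tendsto_nhds_unique (hμ Set.univ) h1
  · intro A
    exact ge_of_tendsto (hμ A) (Filter.Eventually.of_forall fun t => (hf01 A t).1)
  · intro A₁ A₂ hdisj
    have : ∀ t, f (A₁ ∪ A₂) t = f A₁ t + f A₂ t := by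
      intro t
      show (((A₁ ∪ A₂) ∩ B t).ncard : ℝ) / b t =
        ((A₁ ∩ B t).ncard : ℝ) / b t + ((A₂ ∩ B t).ncard : ℝ) / b t
      rw [Set.union_inter_distrib_right,
        Set.ncard_union_eq (hdisj.mono Set.inter_subset_left Set.inter_subset_left)
          ((hfin t).inter_of_right _) ((hfin t).inter_of_right _)]
      push_cast
      ring
    have h1 : Tendsto (f (A₁ ∪ A₂)) (U : Filter ℕ) (𝓝 (μ A₁ + μ A₂)) := by
      simp only [funext this]
      exact (hμ A₁).add (hμ A₂)
    exact tendsto_nhds_unique (hμ (A₁ ∪ A₂)) h1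
  · intro g A
    have hg : g ∈ Subgroup.closure (S : Set G) := hgen ▸ Subgroup.mem_top g
    revert A
    induction hg using Subgroup.closure_induction with
    | mem x hx => exact hinv1 x (Or.inl hx)
    | one => intro A; simp
    | mul x y hx hy ihx ihy =>
      intro A
      have : ((x * y) * ·) '' A = (x * ·) '' ((y * ·) '' A) := by
        rw [← Set.image_comp]
        congr 1
        ext a
        simp [Function.comp, mul_assoc]
      rw [this, ihx, ihy]
    | inv x hx ihx =>
      intro A
      have : (x * ·) '' ((x⁻¹ * ·) '' A) = A := by
        rw [← Set.image_comp]
        ext a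
        simp [Function.comp]
      calc μ ((x⁻¹ * ·) '' A) = μ ((x * ·) '' ((x⁻¹ * ·) '' A)) := (ihx _).symm
        _ = μ A := by rw [this]
end

section
/- Let G be a torsion-free group in which every two non-commuting elements x, y have the property that ⟨x^n, y^n⟩ is free of rank 2 for some fixed n = n_G ≥ 1. Then every finitely generated subgroup H ≤ G is either abelian or has uniform exponential growth: ent(H) ≥ (1/n_G)·log 3. -/
open Filter Real Topology

namespace UEGAux

open FreeGroup Pointwise

abbrev Ltr := Fin 2 × Bool

def step (p : Ltr) : Fin 3 → Ltr
  | 0 => p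
  | 1 => (if p.1 = 0 then 1 else 0, true)
  | 2 => (if p.1 = 0 then 1 else 0, false)

def go : Ltr → List (Fin 3) → List Ltr
  | p, [] => [p]
  | p, k :: ks => p :: go (step p k) ks

/-- "no cancellation" relation between consecutive letters. -/
def R (a b : Ltr) : Prop := ¬(a.1 = b.1 ∧ a.2 = !b.2)

instance : DecidableRel R := fun a b => by unfold R; infer_instance

lemma step_inj' : ∀ (p : Ltr) (k₁ k₂ : Fin 3), step p k₁ = step p k₂ → k₁ = k₂ := by decide

lemma step_inj (p : Ltr) : Function.Injective (step p) := fun _ _ h => step_inj' p _ _ h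

lemma step_R : ∀ (p : Ltr) (k : Fin 3), R p (step p k) := by decide

lemma go_length (p : Ltr) (w : List (Fin 3)) : (go p w).length = w.length + 1 := by
  induction w generalizing p with
  | nil => rfl
  | cons k ks ih => simp [go, ih]

lemma go_head (p : Ltr) (w : List (Fin 3)) : (go p w).head? = some p := by
  cases w <;> rfl

lemma go_inj : ∀ (w₁ w₂ : List (Fin 3)) (p : Ltr), go p w₁ = go p w₂ → w₁ = w₂
  | [], [], _, _ => rfl
  | [], k :: ks, p, h => by
      have := congrArg List.length h; simp [go, go_length] at this
  | k :: ks, [], p, h => by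
      have := congrArg List.length h; simp [go, go_length] at this
  | k₁ :: ks₁, k₂ :: ks₂, p, h => by
      simp only [go, List.cons.injEq, true_and] at h
      have hk : step p k₁ = step p k₂ := by
        have := congrArg List.head? h
        rw [go_head, go_head] at this
        exact Option.some.inj this
      obtain rfl := step_inj p hk
      rw [go_inj ks₁ ks₂ _ h]

lemma go_chain (p : Ltr) (w : List (Fin 3)) : List.Chain' R (go p w) := by
  induction w generalizing p with
  | nil => exact List.isChain_singleton p
  | cons k ks ih =>
      rw [go]; show List.IsChain R _; rw [List.isChain_cons]
      refine ⟨?_, ih _⟩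
      intro y hy
      rw [go_head, Option.mem_some_iff] at hy
      subst hy
      exact step_R p k

lemma reduce_of_chain : ∀ L : List Ltr, List.Chain' R L → FreeGroup.reduce L = L
  | [], _ => rfl
  | x :: L, h => by
      rw [FreeGroup.reduce.cons, reduce_of_chain L h.tail]
      cases L with
      | nil => rfl
      | cons hd tl =>
          have hR : R x hd := (List.isChain_cons_cons.mp h).1
          show (if x.1 = hd.1 ∧ x.2 = !hd.2 then tl else x :: hd :: tl) = x :: hd :: tl
          exact if_neg hR

lemma mk_go_inj (p : Ltr) {w₁ w₂ : List (Fin 3)}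
    (h : FreeGroup.mk (go p w₁) = FreeGroup.mk (go p w₂)) : w₁ = w₂ := by
  apply go_inj w₁ w₂ p
  have := FreeGroup.reduce.sound h
  rwa [reduce_of_chain _ (go_chain _ _), reduce_of_chain _ (go_chain _ _)] at this

lemma hom_mk {G : Type*} [Group G] (φ : FreeGroup (Fin 2) →* G) (L : List Ltr) :
    φ (FreeGroup.mk L)
      = (L.map fun z => cond z.2 (φ (FreeGroup.of z.1)) (φ (FreeGroup.of z.1))⁻¹).prod := by
  have hmk : FreeGroup.mk L
      = (L.map fun z => cond z.2 (FreeGroup.of z.1) (FreeGroup.of z.1)⁻¹).prod := by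
    conv_lhs => rw [show FreeGroup.mk L = FreeGroup.lift FreeGroup.of (FreeGroup.mk L) from (DFunLike.congr_fun (FreeGroup.lift_of_eq_id _) (FreeGroup.mk L)).symm]
    exact FreeGroup.lift_mk
  rw [hmk, map_list_prod, List.map_map]
  congr 1
  apply List.map_congr_left
  rintro ⟨i, b⟩ _
  cases b <;> simp

section Ball

variable {G : Type*} [Group G]

lemma one_mem_wordBall (S : Set G) (t : ℕ) : (1 : G) ∈ wordBall S t :=
  ⟨[], by simp, by simp, by simp⟩

lemma ball_inj (S : Finset G) (t : ℕ) :
    ∃ F : (wordBall (S : Set G) t) →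
        (Fin t → Option {u : G // u ∈ (S : Set G) ∪ ((S : Set G))⁻¹}),
      Function.Injective F := by
  classical
  choose l hl₁ hl₂ hl₃ using fun g : (wordBall (S : Set G) t) => g.2
  have hmem : ∀ (g : (wordBall (S : Set G) t)) (x : G), x ∈ l g →
      x ∈ (S : Set G) ∪ ((S : Set G))⁻¹ := by
    intro g x hx
    rcases hl₁ g x hx with h | h
    · exact Or.inl h
    · exact Or.inr (Set.mem_inv.mpr h)
  set l' : (wordBall (S : Set G) t) → List {u : G // u ∈ (S : Set G) ∪ ((S : Set G))⁻¹} :=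
    fun g => (l g).attach.map fun z => ⟨z.1, hmem g z.1 z.2⟩ with hl'
  have hval : ∀ g, (l' g).map Subtype.val = l g := by
    intro g
    simp [hl', List.map_map, Function.comp_def]
  have hlen' : ∀ g, (l' g).length ≤ t := by
    intro g
    have := congrArg List.length (hval g)
    simp only [List.length_map] at this
    rw [this]
    exact hl₂ g
  refine ⟨fun g i => (l' g)[(i : ℕ)]?, fun g₁ g₂ h => ?_⟩
  have hll' : l' g₁ = l' g₂ := by
    apply List.ext_getElem?
    intro i
    by_cases hi : i < t
    · exact congrFun h ⟨i, hi⟩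
    · rw [List.getElem?_eq_none, List.getElem?_eq_none]
      · exact le_trans (hlen' g₂) (le_of_not_gt hi)
      · exact le_trans (hlen' g₁) (le_of_not_gt hi)
  have hll : l g₁ = l g₂ := by rw [← hval g₁, ← hval g₂, hll']
  exact Subtype.ext (by rw [← hl₃ g₁, ← hl₃ g₂, hll])

lemma ball_finite (S : Finset G) (t : ℕ) : (wordBall (S : Set G) t).Finite := by
  classical
  obtain ⟨F, hF⟩ := ball_inj S t
  have hT : ((S : Set G) ∪ ((S : Set G))⁻¹).Finite :=
    S.finite_toSet.union S.finite_toSet.inv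
  haveI : Finite {u : G // u ∈ (S : Set G) ∪ ((S : Set G))⁻¹} := hT.to_subtype
  haveI := Fintype.ofFinite {u : G // u ∈ (S : Set G) ∪ ((S : Set G))⁻¹}
  haveI := Finite.of_injective F hF
  exact Set.finite_coe_iff.mp ‹_›

lemma ball_card_upper (S : Finset G) (t : ℕ) :
    (wordBall (S : Set G) t).ncard
      ≤ (Nat.card {u : G // u ∈ (S : Set G) ∪ ((S : Set G))⁻¹} + 1) ^ t := by
  classical
  obtain ⟨F, hF⟩ := ball_inj S t
  have hT : ((S : Set G) ∪ ((S : Set G))⁻¹).Finite :=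
    S.finite_toSet.union S.finite_toSet.inv
  haveI : Finite {u : G // u ∈ (S : Set G) ∪ ((S : Set G))⁻¹} := hT.to_subtype
  haveI := Fintype.ofFinite {u : G // u ∈ (S : Set G) ∪ ((S : Set G))⁻¹}
  calc (wordBall (S : Set G) t).ncard
      = Nat.card (wordBall (S : Set G) t) := (Nat.card_coe_set_eq _).symm
    _ ≤ Nat.card (Fin t → Option {u : G // u ∈ (S : Set G) ∪ ((S : Set G))⁻¹}) :=
        Nat.card_le_card_of_injective F hF
    _ = (Nat.card {u : G // u ∈ (S : Set G) ∪ ((S : Set G))⁻¹} + 1) ^ t := by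
        rw [Nat.card_fun, Finite.card_option]
        congr 1
        simp [Nat.card_eq_fintype_card]

lemma ball_card_lower (S : Finset G) {x y : G} (hx : x ∈ S) (hy : y ∈ S)
    {n : ℕ} (hn : 1 ≤ n) (φ : FreeGroup (Fin 2) →* G) (hinj : Function.Injective φ)
    (h0 : φ (FreeGroup.of 0) = x ^ n) (h1 : φ (FreeGroup.of 1) = y ^ n)
    (t : ℕ) (ht : n ≤ t) :
    3 ^ (t / n - 1) ≤ (wordBall (S : Set G) t).ncard := by
  classical
  set m : ℕ := t / n - 1 with hm
  set ξ : Fin 2 → G := fun i => if i = 0 then x else y with hξ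
  have hξS : ∀ i, ξ i ∈ (S : Set G) := by
    intro i
    by_cases h : i = 0 <;> simp [hξ, h, hx, hy]
  have hφof : ∀ i : Fin 2, φ (FreeGroup.of i) = (ξ i) ^ n := by
    intro i
    fin_cases i <;> simp [hξ, h0, h1]
  set a₀ : Ltr := ((0 : Fin 2), true) with ha₀
  set ψ : (Fin m → Fin 3) → G := fun w => φ (FreeGroup.mk (go a₀ (List.ofFn w))) with hψ
  have hψinj : Function.Injective ψ := by
    intro w₁ w₂ h
    have := mk_go_inj a₀ (hinj h)
    exact List.ofFn_inj.mp this
  have hrange : ψ '' Set.univ ⊆ wordBall (S : Set G) t := by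
    rintro _ ⟨w, -, rfl⟩
    refine ⟨((go a₀ (List.ofFn w)).map
        fun z => List.replicate n (cond z.2 (ξ z.1) (ξ z.1)⁻¹)).flatten, ?_, ?_, ?_⟩
    · intro u hu
      rw [List.mem_flatten] at hu
      obtain ⟨L, hL, huL⟩ := hu
      rw [List.mem_map] at hL
      obtain ⟨z, hz, rfl⟩ := hL
      rw [List.mem_replicate] at huL
      cases hb : z.2 with
      | true =>
          left
          have := huL.2
          rw [hb] at this
          rw [this]
          exact hξS z.1
      | false =>
          right
          have := huL.2
          rw [hb] at this
          rw [this]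
          simpa using hξS z.1
    · rw [List.length_flatten, List.map_map]
      have hmap : ((go a₀ (List.ofFn w)).map
          (List.length ∘ fun z => List.replicate n (cond z.2 (ξ z.1) (ξ z.1)⁻¹)))
          = (go a₀ (List.ofFn w)).map (fun _ => n) := by
        apply List.map_congr_left
        intro z _
        simp
      rw [hmap, List.map_const', List.sum_replicate, smul_eq_mul, go_length, List.length_ofFn]
      have hm1 : m + 1 = t / n := by
        rw [hm, Nat.sub_add_cancel ((Nat.one_le_div_iff (lt_of_lt_of_le Nat.zero_lt_one hn)).mpr ht)]
      rw [hm1]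
      exact Nat.div_mul_le_self t n
    · rw [List.prod_flatten, List.map_map]
      have hmap : ((go a₀ (List.ofFn w)).map
          (List.prod ∘ fun z => List.replicate n (cond z.2 (ξ z.1) (ξ z.1)⁻¹)))
          = (go a₀ (List.ofFn w)).map
              (fun z => cond z.2 (φ (FreeGroup.of z.1)) (φ (FreeGroup.of z.1))⁻¹) := by
        apply List.map_congr_left
        intro z _
        cases hb : z.2 <;> simp [hb, List.prod_replicate, hφof, inv_pow]
      rw [hmap, ← hom_mk]
  have hfin := ball_finite S t
  calc 3 ^ m = Nat.card (Fin m → Fin 3) := by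
        rw [Nat.card_fun]
        simp [Nat.card_eq_fintype_card]
    _ = (Set.univ : Set (Fin m → Fin 3)).ncard := (Set.ncard_univ _).symm
    _ = (ψ '' Set.univ).ncard := (Set.ncard_image_of_injective _ hψinj).symm
    _ ≤ (wordBall (S : Set G) t).ncard := Set.ncard_le_ncard hrange hfin

end Ball

end UEGAux

/-- In a torsion-free group where any two non-commuting elements `x, y` are such
that `⟨x^n, y^n⟩` is free of rank 2 (for a fixed `n`), every finitely generated
subgroup is either abelian or has uniform exponential growth at least
`(1/n)·log 3`. -/
theorem abelian_or_uniform_growth {G : Type*} [Group G]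
    (hTF : ∀ g : G, g ≠ 1 → ∀ m : ℕ, 0 < m → g ^ m ≠ 1)
    (n : ℕ) (hn : 1 ≤ n)
    (hfree : ∀ x y : G, ¬Commute x y →
      ∃ φ : FreeGroup (Fin 2) →* G, Function.Injective φ ∧
        φ (FreeGroup.of 0) = x ^ n ∧ φ (FreeGroup.of 1) = y ^ n)
    (H : Subgroup G) :
    (∀ a ∈ H, ∀ b ∈ H, Commute a b) ∨
    (∀ S : Finset G, (S : Set G) ⊆ H → Subgroup.closure (S : Set G) = H →
      (1 / n : ℝ) * Real.log 3 ≤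
        Filter.liminf
          (fun t : ℕ => Real.log ((wordBall (S : Set G) t).ncard) / t) atTop) := by
  classical
  by_cases hab : ∀ a ∈ H, ∀ b ∈ H, Commute a b
  · exact Or.inl hab
  refine Or.inr fun S hSsub hSgen => ?_
  -- find a non-commuting pair among the generators
  have hpair : ∃ x ∈ S, ∃ y ∈ S, ¬Commute x y := by
    by_contra hc
    push_neg at hc
    apply hab
    intro a ha b hb
    rw [← hSgen] at ha hb
    have h1 : Subgroup.closure (S : Set G) ≤ Subgroup.centralizer (S : Set G) := by
      rw [Subgroup.closure_le]
      intro p hp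
      rw [SetLike.mem_coe, Subgroup.mem_centralizer_iff]
      intro q hq
      exact hc q hq p hp
    have hb' : ∀ p ∈ (S : Set G), p * b = b * p :=
      Subgroup.mem_centralizer_iff.mp (h1 hb)
    have h2 : Subgroup.closure (S : Set G) ≤ Subgroup.centralizer {b} := by
      rw [Subgroup.closure_le]
      intro p hp
      rw [SetLike.mem_coe, Subgroup.mem_centralizer_iff]
      intro q hq
      rw [Set.mem_singleton_iff] at hq
      subst hq
      exact (hb' p hp).symm
    exact (Subgroup.mem_centralizer_iff.mp (h2 ha) b rfl).symm
  obtain ⟨x, hx, y, hy, hxy⟩ := hpair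
  obtain ⟨φ, hφinj, h0, h1⟩ := hfree x y hxy
  have hn0 : (0 : ℕ) < n := lt_of_lt_of_le Nat.zero_lt_one hn
  have hn0R : (0 : ℝ) < (n : ℝ) := by exact_mod_cast hn0
  set f : ℕ → ℝ := fun t => Real.log ((wordBall (S : Set G) t).ncard) / t with hf
  set g : ℕ → ℝ := fun t : ℕ => (1 / (n : ℝ) - 2 / t) * Real.log 3 with hg
  have hlog3 : (0 : ℝ) ≤ Real.log 3 := Real.log_nonneg (by norm_num)
  have hcard_pos : ∀ t, 1 ≤ (wordBall (S : Set G) t).ncard := by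
    intro t
    have := (Set.ncard_pos (UEGAux.ball_finite S t)).mpr ⟨1, UEGAux.one_mem_wordBall _ t⟩
    omega
  -- the key eventual inequality
  have key : ∀ t : ℕ, n ≤ t → g t ≤ f t := by
    intro t ht
    have ht0 : (0 : ℝ) < (t : ℝ) := by
      have : 0 < t := lt_of_lt_of_le hn0 ht
      exact_mod_cast this
    have htne : (t : ℝ) ≠ 0 := ne_of_gt ht0
    have hnne : (n : ℝ) ≠ 0 := ne_of_gt hn0R
    set m : ℕ := t / n - 1 with hm
    have hq1 : 1 ≤ t / n := (Nat.one_le_div_iff hn0).mpr ht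
    have hmcast : (m : ℝ) = ((t / n : ℕ) : ℝ) - 1 := by
      rw [hm]
      push_cast [hq1]
      ring
    have hlt : (t : ℝ) < n * ((t / n : ℕ) : ℝ) + n := by
      have h1' := Nat.div_add_mod t n
      have h2' := Nat.mod_lt t hn0
      have h1R : (n : ℝ) * ((t / n : ℕ) : ℝ) + ((t % n : ℕ) : ℝ) = (t : ℝ) := by
        exact_mod_cast h1'
      have h2R : ((t % n : ℕ) : ℝ) < (n : ℝ) := by exact_mod_cast h2'
      linarith
    have hdiv : (t : ℝ) / n - 2 ≤ (m : ℝ) := by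
      rw [hmcast]
      have : (t : ℝ) / n < ((t / n : ℕ) : ℝ) + 1 := by
        rw [div_lt_iff₀ hn0R]
        nlinarith
      linarith
    have hlow := UEGAux.ball_card_lower S hx hy hn φ hφinj h0 h1 t ht
    have h3 : ((3 : ℝ)) ^ m ≤ (((wordBall (S : Set G) t).ncard : ℕ) : ℝ) := by
      exact_mod_cast hlow
    have hlog : (m : ℝ) * Real.log 3 ≤ Real.log ((wordBall (S : Set G) t).ncard) := by
      calc (m : ℝ) * Real.log 3 = Real.log ((3 : ℝ) ^ m) := by rw [Real.log_pow]
        _ ≤ _ := Real.log_le_log (by positivity) h3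
    simp only [hg, hf]
    rw [le_div_iff₀ ht0]
    calc (1 / (n : ℝ) - 2 / t) * Real.log 3 * t
        = ((t : ℝ) / n - 2) * Real.log 3 := by field_simp
      _ ≤ (m : ℝ) * Real.log 3 := mul_le_mul_of_nonneg_right hdiv hlog3
      _ ≤ _ := hlog
  have hgt : Tendsto g atTop (𝓝 ((1 / (n : ℝ)) * Real.log 3)) := by
    have h2 : Tendsto (fun t : ℕ => 2 / (t : ℝ)) atTop (𝓝 0) :=
      tendsto_const_div_atTop_nhds_zero_nat 2
    have := (tendsto_const_nhds (x := (1 / (n : ℝ))) (f := atTop)).sub h2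
    have hmul := this.mul_const (Real.log 3)
    simpa [hg, sub_zero] using hmul
  rw [show (1 / (n : ℝ)) * Real.log 3 = liminf g atTop from (hgt.liminf_eq).symm]
  apply Filter.liminf_le_liminf
  · filter_upwards [eventually_ge_atTop n] with t ht using key t ht
  · -- g is bounded below
    refine ⟨-2 * Real.log 3, ?_⟩
    rw [Filter.eventually_map]
    apply Eventually.of_forall
    intro t
    have h2t : 2 / (t : ℝ) ≤ 2 := by
      rcases Nat.eq_zero_or_pos t with h | h
      · simp [h]
      · have h1t : (1 : ℝ) ≤ (t : ℝ) := by exact_mod_cast h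
        rw [div_le_iff₀ (by linarith)]
        nlinarith
    have hn' : (0 : ℝ) ≤ 1 / (n : ℝ) := by positivity
    simp only [hg]
    nlinarith
  · -- f is cobounded
    apply Filter.isCoboundedUnder_ge_of_eventually_le atTop
      (x := Real.log ((Nat.card {u : G // u ∈ (S : Set G) ∪ ((S : Set G))⁻¹} + 1 : ℕ) : ℝ))
    filter_upwards [eventually_ge_atTop 1] with t ht
    set K : ℕ := Nat.card {u : G // u ∈ (S : Set G) ∪ ((S : Set G))⁻¹} + 1 with hK
    have hub := UEGAux.ball_card_upper S t
    rw [← hK] at hub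
    have h1t : (0 : ℝ) < (t : ℝ) := by exact_mod_cast ht
    simp only [hf]
    rw [div_le_iff₀ h1t]
    have hcast : (((wordBall (S : Set G) t).ncard : ℕ) : ℝ) ≤ ((K : ℝ)) ^ t := by
      exact_mod_cast hub
    have hpos : (0 : ℝ) < (((wordBall (S : Set G) t).ncard : ℕ) : ℝ) := by
      exact_mod_cast hcard_pos t
    calc Real.log ((wordBall (S : Set G) t).ncard)
        ≤ Real.log ((K : ℝ) ^ t) := Real.log_le_log hpos hcast
      _ = t * Real.log K := by rw [Real.log_pow]
      _ = Real.log K * t := mul_comm _ _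
end
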